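/- For real q with 1 ≤ q < 2 and x ≥ 16, Σ_{|n| ≤ X} (X/(1+|n|))^{q(q−1)} ≪ X^{max{1, q(q−1)}} · min{log X, 1/|q − q₀|}, where X ≥ 2 and q₀ = (1+√5)/2 is the golden ratio (the unique q > 1 with q(q−1) = 1). -/
import Mathlib
set_option maxHeartbeats 1000000
open Finset

lemma tail_sum_le (a : ℝ) (ha : 0 ≤ a) (ha1 : a ≠ 1) (n : ℕ) :
    ∑ k ∈ Finset.range n, ((k : ℝ) + 2) ^ (-a) ≤ (((n : ℝ) + 1) ^ (1 - a) - 1) / (1 - a) := by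
  have hanti : AntitoneOn (fun x : ℝ => x ^ (-a)) (Set.Icc (1 : ℝ) (1 + n)) := by
    refine (Real.antitoneOn_rpow_Ioi_of_exponent_nonpos (by linarith)).mono ?_
    intro x hx
    exact lt_of_lt_of_le one_pos hx.1
  have h := hanti.sum_le_integral
  have hint : ∫ x in (1:ℝ)..(1 + n), x ^ (-a) = (((1:ℝ) + n) ^ (-a + 1) - 1 ^ (-a + 1)) / (-a + 1) := by
    rw [integral_rpow]
    right
    refine ⟨fun h' => ha1 (by linarith), fun hmem => ?_⟩
    rw [Set.mem_uIcc] at hmem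
    have : (0:ℝ) ≤ n := Nat.cast_nonneg n
    rcases hmem with ⟨h1, _⟩ | ⟨_, h2⟩ <;> linarith
  rw [hint] at h
  have heq : ∑ k ∈ Finset.range n, ((k : ℝ) + 2) ^ (-a)
      = ∑ i ∈ Finset.range n, ((1 : ℝ) + ((i:ℕ) + 1 : ℕ)) ^ (-a) := by
    apply Finset.sum_congr rfl
    intro i _
    push_cast
    ring_nf
  rw [heq]
  calc _ ≤ _ := h
  _ = (((n : ℝ) + 1) ^ (1 - a) - 1) / (1 - a) := by
      rw [Real.one_rpow]
      ring_nf

lemma S_le (a : ℝ) (ha : 0 ≤ a) (ha1 : a ≠ 1) (M : ℕ) (hM : 1 ≤ M) :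
    ∑ k ∈ Finset.range M, ((k : ℝ) + 1) ^ (-a) ≤ 1 + (((M : ℝ)) ^ (1 - a) - 1) / (1 - a) := by
  obtain ⟨n, rfl⟩ : ∃ n, M = n + 1 := ⟨M - 1, (Nat.succ_pred_eq_of_pos hM).symm⟩
  rw [Finset.sum_range_succ']
  have h1 : (((0:ℕ):ℝ) + 1) ^ (-a) = 1 := by norm_num
  rw [h1]
  have h2 : ∑ i ∈ Finset.range n, (((i + 1 : ℕ) : ℝ) + 1) ^ (-a)
      = ∑ i ∈ Finset.range n, ((i : ℝ) + 2) ^ (-a) := by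
    apply Finset.sum_congr rfl; intro i _; push_cast; ring_nf
  rw [h2, add_comm]
  have := tail_sum_le a ha ha1 n
  have hcast : ((n:ℝ) + 1) = ((n + 1 : ℕ) : ℝ) := by push_cast; ring
  rw [hcast] at this
  linarith

lemma harm_le (M : ℕ) : ∑ k ∈ Finset.range M, ((k : ℝ) + 1)⁻¹ ≤ 1 + Real.log M := by
  have h := harmonic_le_one_add_log M
  have heq : ((harmonic M : ℚ) : ℝ) = ∑ k ∈ Finset.range M, ((k : ℝ) + 1)⁻¹ := by
    rw [harmonic]; push_cast; rfl
  rw [← heq]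
  exact_mod_cast h

lemma sum_Icc_neg_le (g : ℕ → ℝ) (hg : ∀ k, 0 ≤ g k) (m : ℕ) :
    ∑ n ∈ Finset.Icc (-(m:ℤ)) (m:ℤ), g n.natAbs ≤ 2 * ∑ k ∈ Finset.range (m+1), g k := by
  have hsplit : ∑ n ∈ Finset.Icc (-(m:ℤ)) (m:ℤ), g n.natAbs
      = ∑ n ∈ Finset.Ico (-(m:ℤ)) 0, g n.natAbs + ∑ n ∈ Finset.Ico (0:ℤ) ((m:ℤ)+1), g n.natAbs := by
    have h : Finset.Icc (-(m:ℤ)) (m:ℤ) = Finset.Ico (-(m:ℤ)) ((m:ℤ)+1) := by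
      ext n; simp only [Finset.mem_Icc, Finset.mem_Ico]; omega
    rw [h, ← Finset.Ico_union_Ico_eq_Ico (by omega : -(m:ℤ) ≤ 0) (by omega : (0:ℤ) ≤ (m:ℤ)+1),
      Finset.sum_union (Finset.Ico_disjoint_Ico_consecutive _ _ _)]
  have hpart2 : ∑ n ∈ Finset.Ico (0:ℤ) ((m:ℤ)+1), g n.natAbs = ∑ k ∈ Finset.range (m+1), g k := by
    refine Finset.sum_nbij' (i := fun n : ℤ => n.natAbs) (j := fun k : ℕ => (k:ℤ)) ?_ ?_ ?_ ?_ ?_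
    · intro n hn; simp only [Finset.mem_Ico] at hn; simp only [Finset.mem_range]; omega
    · intro k hk; simp only [Finset.mem_range] at hk; simp only [Finset.mem_Ico]; omega
    · intro n hn; simp only [Finset.mem_Ico] at hn
      show ((n.natAbs : ℤ)) = n; omega
    · intro k _; simp
    · intro n _; rfl
  have hpart1 : ∑ n ∈ Finset.Ico (-(m:ℤ)) 0, g n.natAbs
      = ∑ n ∈ Finset.Ico (1:ℤ) ((m:ℤ)+1), g n.natAbs := by
    refine Finset.sum_nbij' (i := fun n : ℤ => -n) (j := fun n : ℤ => -n) ?_ ?_ ?_ ?_ ?_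
    · intro n hn; simp only [Finset.mem_Ico] at hn ⊢; omega
    · intro n hn; simp only [Finset.mem_Ico] at hn ⊢; omega
    · intro n _; ring
    · intro n _; ring
    · intro n _; simp
  have hsub : ∑ n ∈ Finset.Ico (1:ℤ) ((m:ℤ)+1), g n.natAbs
      ≤ ∑ n ∈ Finset.Ico (0:ℤ) ((m:ℤ)+1), g n.natAbs := by
    apply Finset.sum_le_sum_of_subset_of_nonneg
    · exact Finset.Ico_subset_Ico (by omega) le_rfl
    · intro i _ _; exact hg _
  rw [hsplit, hpart1, hpart2]
  rw [hpart2] at hsub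
  linarith

/-- For real `1 ≤ q < 2` and `X ≥ 2`,
`Σ_{|n| ≤ X} (X/(1+|n|))^{q(q-1)} ≪ X^{max{1, q(q-1)}} · min{log X, 1/|q - q₀|}`,
where `q₀ = (1+√5)/2` is the golden ratio (so that at `q = q₀` the factor is `log X`). -/
theorem golden_ratio_sum_bound :
    ∃ C : ℝ, 0 < C ∧
      ∀ q X : ℝ, 1 ≤ q → q < 2 → 2 ≤ X →
        ∑ n ∈ Finset.Icc (-⌊X⌋) ⌊X⌋,
            (X / (1 + |(n : ℝ)|)) ^ (q * (q - 1)) ≤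
          C * X ^ max 1 (q * (q - 1)) *
            (if q = (1 + Real.sqrt 5) / 2 then Real.log X
             else min (Real.log X) (1 / |q - (1 + Real.sqrt 5) / 2|)) := by
  refine ⟨14, by norm_num, ?_⟩
  intro q X hq1 hq2 hX
  set a := q * (q - 1) with ha_def
  have ha0 : 0 ≤ a := by nlinarith
  have ha2 : a < 2 := by nlinarith
  have ha1max : 1 ≤ max 1 a := le_max_left 1 a
  have hX0 : (0:ℝ) < X := by linarith
  have hX1 : (1:ℝ) ≤ X := by linarith
  have hs5 : Real.sqrt 5 ^ 2 = 5 := Real.sq_sqrt (by norm_num)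
  have hs5' : 2 ≤ Real.sqrt 5 := by nlinarith [Real.sqrt_nonneg 5]
  have hs5'' : Real.sqrt 5 ≤ 3 := by nlinarith [Real.sqrt_nonneg 5]
  -- floor setup
  have hfl2 : (2:ℤ) ≤ ⌊X⌋ := by exact_mod_cast Int.le_floor.mpr (by exact_mod_cast hX)
  set m := ⌊X⌋.toNat with hm_def
  have hmz : (m : ℤ) = ⌊X⌋ := Int.toNat_of_nonneg (by omega)
  have hmX : (m:ℝ) ≤ X := by
    have := Int.floor_le X
    rw [← hmz] at this
    exact_mod_cast this
  have hm2X : (m:ℝ) + 1 ≤ 2 * X := by linarith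
  -- the summand function
  set g : ℕ → ℝ := fun k => (X / (1 + (k:ℝ))) ^ a with hg_def
  have hg0 : ∀ k, 0 ≤ g k := fun k => Real.rpow_nonneg (by positivity) a
  -- rewrite LHS
  have hLHS : ∑ n ∈ Finset.Icc (-⌊X⌋) ⌊X⌋, (X / (1 + |(n : ℝ)|)) ^ a
      = ∑ n ∈ Finset.Icc (-(m:ℤ)) (m:ℤ), g n.natAbs := by
    rw [hmz]
    apply Finset.sum_congr rfl
    intro n _
    have : |((n:ℤ) : ℝ)| = ((n.natAbs : ℕ) : ℝ) := by
      rw [Nat.cast_natAbs, Int.cast_abs]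
    rw [this]
  have hred : ∑ n ∈ Finset.Icc (-⌊X⌋) ⌊X⌋, (X / (1 + |(n : ℝ)|)) ^ a
      ≤ 2 * ∑ k ∈ Finset.range (m+1), g k := by
    rw [hLHS]; exact sum_Icc_neg_le g hg0 m
  set T := ∑ k ∈ Finset.range (m+1), g k with hT_def
  set S := ∑ k ∈ Finset.range (m+1), ((k:ℝ) + 1) ^ (-a) with hS_def
  have hTS : T = X ^ a * S := by
    rw [hT_def, hS_def, Finset.mul_sum]
    apply Finset.sum_congr rfl
    intro k _
    have hk1 : (0:ℝ) < (k:ℝ) + 1 := by positivity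
    rw [hg_def]
    show (X / (1 + (k:ℝ))) ^ a = X ^ a * ((k:ℝ) + 1) ^ (-a)
    rw [Real.rpow_neg hk1.le, Real.div_rpow hX0.le (by positivity), div_eq_mul_inv]
    ring_nf
  -- X^max facts
  have hXmax1 : X ≤ X ^ max 1 a := by
    calc X = X ^ (1:ℝ) := (Real.rpow_one X).symm
    _ ≤ X ^ max 1 a := Real.rpow_le_rpow_of_exponent_le hX1 (le_max_left 1 a)
  have hXmaxa : X ^ a ≤ X ^ max 1 a := Real.rpow_le_rpow_of_exponent_le hX1 (le_max_right 1 a)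
  have hXmax0 : (0:ℝ) < X ^ max 1 a := Real.rpow_pos_of_pos hX0 _
  have hXa0 : (0:ℝ) < X ^ a := Real.rpow_pos_of_pos hX0 _
  -- log facts
  have hlog2 : (0.6931471803:ℝ) < Real.log 2 := Real.log_two_gt_d9
  have hlog2' : Real.log 2 < 0.6931471808 := Real.log_two_lt_d9
  have hlogX2 : Real.log 2 ≤ Real.log X := Real.log_le_log (by norm_num) hX
  have hlogX0 : (0:ℝ) < Real.log X := by linarith
  -- harmonic bound
  have hharm : ∑ k ∈ Finset.range (m+1), ((k:ℝ) + 1)⁻¹ ≤ 3.5 * Real.log X := by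
    have h1 := harm_le (m+1)
    have h2 : Real.log ((m+1 : ℕ) : ℝ) ≤ Real.log (2 * X) := by
      apply Real.log_le_log (by positivity)
      push_cast
      linarith
    rw [Real.log_mul (by norm_num) (by positivity)] at h2
    calc ∑ k ∈ Finset.range (m+1), ((k:ℝ) + 1)⁻¹ ≤ 1 + Real.log ((m+1:ℕ):ℝ) := h1
    _ ≤ 1 + Real.log 2 + Real.log X := by linarith
    _ ≤ 3.5 * Real.log X := by linarith
  -- LOG BOUND: 2*T ≤ 14 * X^max * log X
  have key1 : 2 * T ≤ 14 * X ^ max 1 a * Real.log X := by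
    rcases le_or_gt a 1 with hle | hgt
    · -- a ≤ 1 : pointwise g k ≤ 2X/(k+1)
      have hpt : ∀ k ∈ Finset.range (m+1), g k ≤ 2 * X * ((k:ℝ) + 1)⁻¹ := by
        intro k hk
        have hk1 : (0:ℝ) < 1 + (k:ℝ) := by positivity
        have hkm : (k:ℝ) ≤ (m:ℝ) := by
          have := Finset.mem_range.mp hk
          exact_mod_cast Nat.lt_succ_iff.mp this
        have ht0 : (0:ℝ) < X / (1 + (k:ℝ)) := by positivity
        rcases le_or_gt 1 (X / (1 + (k:ℝ))) with h1t | ht1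
        · have : g k ≤ X / (1 + (k:ℝ)) := by
            rw [hg_def]
            calc (X / (1 + (k:ℝ))) ^ a ≤ (X / (1 + (k:ℝ))) ^ (1:ℝ) :=
              Real.rpow_le_rpow_of_exponent_le h1t hle
            _ = X / (1 + (k:ℝ)) := Real.rpow_one _
          calc g k ≤ X / (1 + (k:ℝ)) := this
          _ ≤ 2 * X * ((k:ℝ) + 1)⁻¹ := by
            rw [div_eq_mul_inv, add_comm 1 (k:ℝ)]
            have hnn : (0:ℝ) ≤ X * ((k:ℝ)+1)⁻¹ := by positivity
            linarith
        · have hg1 : g k ≤ 1 := Real.rpow_le_one ht0.le ht1.le ha0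
          have hk2X : (k:ℝ) + 1 ≤ 2 * X := by linarith
          have : (1:ℝ) ≤ 2 * X * ((k:ℝ) + 1)⁻¹ := by
            calc (1:ℝ) = ((k:ℝ)+1) * ((k:ℝ)+1)⁻¹ := by field_simp
            _ ≤ 2 * X * ((k:ℝ)+1)⁻¹ := mul_le_mul_of_nonneg_right hk2X (by positivity)
          linarith
      have hsum : T ≤ 2 * X * ∑ k ∈ Finset.range (m+1), ((k:ℝ) + 1)⁻¹ := by
        rw [Finset.mul_sum]
        exact Finset.sum_le_sum hpt
      have : T ≤ 2 * X * (3.5 * Real.log X) := by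
        calc T ≤ 2 * X * ∑ k ∈ Finset.range (m+1), ((k:ℝ) + 1)⁻¹ := hsum
        _ ≤ 2 * X * (3.5 * Real.log X) := by
          apply mul_le_mul_of_nonneg_left hharm (by positivity)
      have h7 : X * Real.log X ≤ X ^ max 1 a * Real.log X :=
        mul_le_mul_of_nonneg_right hXmax1 hlogX0.le
      have hv : (0:ℝ) ≤ X ^ max 1 a * Real.log X := by positivity
      have hthis : T ≤ 7 * (X * Real.log X) := by linarith
      calc 2 * T ≤ 14 * (X * Real.log X) := by linarith
      _ ≤ 14 * (X ^ max 1 a * Real.log X) := by linarith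
      _ = 14 * X ^ max 1 a * Real.log X := by ring
    · -- a > 1 : S ≤ harm
      have hSh : S ≤ 3.5 * Real.log X := by
        refine le_trans (Finset.sum_le_sum ?_) hharm
        intro k _
        have hk1 : (1:ℝ) ≤ (k:ℝ) + 1 := by
          have : (0:ℝ) ≤ (k:ℝ) := Nat.cast_nonneg k
          linarith
        calc ((k:ℝ) + 1) ^ (-a) ≤ ((k:ℝ) + 1) ^ (-1:ℝ) :=
          Real.rpow_le_rpow_of_exponent_le hk1 (by linarith)
        _ = ((k:ℝ) + 1)⁻¹ := by rw [Real.rpow_neg_one]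
      have : T ≤ X ^ a * (3.5 * Real.log X) := by
        rw [hTS]
        exact mul_le_mul_of_nonneg_left hSh hXa0.le
      have h7 : X ^ a * Real.log X ≤ X ^ max 1 a * Real.log X :=
        mul_le_mul_of_nonneg_right hXmaxa hlogX0.le
      have hv : (0:ℝ) ≤ X ^ max 1 a * Real.log X := by positivity
      have hthis : T ≤ 3.5 * (X ^ a * Real.log X) := by linarith
      calc 2 * T ≤ 7 * (X ^ a * Real.log X) := by linarith
      _ ≤ 14 * (X ^ max 1 a * Real.log X) := by linarith
      _ = 14 * X ^ max 1 a * Real.log X := by ring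
  -- MIN BOUND (q ≠ φ)
  set φ := (1 + Real.sqrt 5) / 2 with hφ_def
  have key2 : q ≠ φ → 2 * T ≤ 14 * X ^ max 1 a * (1 / |q - φ|) := by
    intro hqφ
    have hfact : a - 1 = (q - φ) * (q - (1 - Real.sqrt 5) / 2) := by
      rw [ha_def, hφ_def]
      linear_combination (1/4 : ℝ) * hs5
    have hψ : (1:ℝ) ≤ q - (1 - Real.sqrt 5) / 2 := by linarith
    have habs : |q - φ| ≤ |a - 1| := by
      rw [hfact, abs_mul, abs_of_nonneg (by linarith : (0:ℝ) ≤ q - (1 - Real.sqrt 5)/2)]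
      exact le_mul_of_one_le_right (abs_nonneg _) hψ
    have hqφ0 : 0 < |q - φ| := abs_pos.mpr (sub_ne_zero.mpr hqφ)
    have ha1 : a ≠ 1 := by
      intro h
      have hz : |a - 1| = 0 := by rw [h]; simp
      rw [hz] at habs
      linarith
    have hinv : 1 / |a - 1| ≤ 1 / |q - φ| :=
      one_div_le_one_div_of_le hqφ0 habs
    have ha10 : 0 < |a - 1| := lt_of_lt_of_le hqφ0 habs
    -- core bound : T ≤ 3 * X^max / |a-1|
    have hcore : T ≤ 3 * X ^ max 1 a * (1 / |a - 1|) := by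
      have hSle := S_le a ha0 ha1 (m+1) (by omega)
      rcases lt_or_gt_of_ne ha1 with hlt | hgt
      · -- a < 1
        set c := 1 - a with hc_def
        have hc0 : 0 < c := by linarith
        have hc1 : c ≤ 1 := by linarith
        have hM2X : ((m+1:ℕ):ℝ) ≤ 2 * X := by push_cast; linarith
        have hMc : ((m+1:ℕ):ℝ) ^ c ≤ 2 * X ^ c := by
          calc ((m+1:ℕ):ℝ) ^ c ≤ (2*X) ^ c := Real.rpow_le_rpow (by positivity) hM2X hc0.le
          _ = 2 ^ c * X ^ c := Real.mul_rpow (by norm_num) hX0.le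
          _ ≤ 2 * X ^ c := by
            have h2c : (2:ℝ) ^ c ≤ 2 := by
              calc (2:ℝ) ^ c ≤ (2:ℝ) ^ (1:ℝ) := Real.rpow_le_rpow_of_exponent_le (by norm_num) hc1
              _ = 2 := Real.rpow_one 2
            have hxc : (0:ℝ) ≤ X ^ c := (Real.rpow_pos_of_pos hX0 c).le
            exact mul_le_mul_of_nonneg_right h2c hxc
        have hXaXc : X ^ a * X ^ c = X := by
          rw [← Real.rpow_add hX0]
          norm_num [hc_def]
        have hS2 : S ≤ 1 + 2 * X ^ c / c := by
          have hd : (((m+1:ℕ):ℝ) ^ c - 1) / c ≤ 2 * X ^ c / c :=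
            (div_le_div_iff_of_pos_right hc0).mpr (by linarith)
          calc S ≤ 1 + (((m+1:ℕ):ℝ) ^ c - 1) / c := hSle
          _ ≤ 1 + 2 * X ^ c / c := by linarith
        have hT3 : T ≤ 3 * X / c := by
          rw [hTS]
          have hXa_le : X ^ a ≤ X := by
            calc X ^ a ≤ X ^ (1:ℝ) := Real.rpow_le_rpow_of_exponent_le hX1 (by linarith)
            _ = X := Real.rpow_one X
          have hXc0 : (0:ℝ) < X ^ c := Real.rpow_pos_of_pos hX0 c
          have e1 : X ^ a * S ≤ X ^ a * (1 + 2 * X ^ c / c) :=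
            mul_le_mul_of_nonneg_left hS2 hXa0.le
          have e2 : X ^ a * (1 + 2 * X ^ c / c) = X ^ a + 2 * X / c := by
            have h' : X ^ a * (2 * X ^ c / c) = 2 * (X ^ a * X ^ c) / c := by ring
            rw [mul_add, mul_one, h', hXaXc]
          have e3 : X ^ a ≤ X / c := by
            calc X ^ a ≤ X := hXa_le
            _ ≤ X / c := by
              rw [le_div_iff₀ hc0]
              have := mul_le_mul_of_nonneg_left hc1 hX0.le
              linarith
          calc X ^ a * S ≤ X ^ a + 2 * X / c := by rw [← e2]; exact e1
          _ ≤ X / c + 2 * X / c := by linarith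
          _ = 3 * X / c := by ring
        have habs_c : |a - 1| = c := by
          rw [abs_of_nonpos (by linarith)]
          rw [hc_def]; ring
        rw [habs_c]
        calc T ≤ 3 * X / c := hT3
        _ ≤ 3 * X ^ max 1 a * (1 / c) := by
          rw [div_eq_mul_one_div]
          have h' : X * (1/c) ≤ X ^ max 1 a * (1/c) :=
            mul_le_mul_of_nonneg_right hXmax1 (by positivity)
          linarith
      · -- a > 1
        have ha1' : 0 < a - 1 := by linarith
        have hM0 : (0:ℝ) ≤ ((m+1:ℕ):ℝ) ^ (1-a) := Real.rpow_nonneg (by positivity) _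
        have hS2 : S ≤ 2 / (a - 1) := by
          have e1 : (((m+1:ℕ):ℝ) ^ (1-a) - 1) / (1 - a) = (1 - ((m+1:ℕ):ℝ) ^ (1-a)) / (a - 1) := by
            rw [div_eq_div_iff (by linarith) (by linarith)]
            ring
          have e2 : (1 - ((m+1:ℕ):ℝ) ^ (1-a)) / (a - 1) ≤ 1 / (a - 1) :=
            (div_le_div_iff_of_pos_right ha1').mpr (by linarith)
          have e3 : (1:ℝ) ≤ 1 / (a - 1) := by
            rw [le_div_iff₀ ha1']
            linarith
          calc S ≤ 1 + (((m+1:ℕ):ℝ) ^ (1-a) - 1) / (1 - a) := hSle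
          _ = 1 + (1 - ((m+1:ℕ):ℝ) ^ (1-a)) / (a - 1) := by rw [e1]
          _ ≤ 1 / (a-1) + 1 / (a-1) := by linarith
          _ = 2 / (a-1) := by ring
        have habs_c : |a - 1| = a - 1 := abs_of_pos ha1'
        rw [habs_c]
        rw [hTS]
        calc X ^ a * S ≤ X ^ a * (2 / (a-1)) := mul_le_mul_of_nonneg_left hS2 hXa0.le
        _ ≤ 3 * X ^ max 1 a * (1 / (a-1)) := by
          have h1 : (0:ℝ) ≤ 1 / (a-1) := by positivity
          have h' : X ^ a * (1/(a-1)) ≤ X ^ max 1 a * (1/(a-1)) :=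
            mul_le_mul_of_nonneg_right hXmaxa h1
          have hv : (0:ℝ) ≤ X ^ max 1 a * (1/(a-1)) := by positivity
          have hrw : X ^ a * (2 / (a-1)) = 2 * (X ^ a * (1/(a-1))) := by ring
          rw [hrw]
          linarith
    calc 2 * T ≤ 6 * X ^ max 1 a * (1 / |a - 1|) := by linarith
    _ ≤ 14 * X ^ max 1 a * (1 / |q - φ|) := by
      have h' : X ^ max 1 a * (1/|a-1|) ≤ X ^ max 1 a * (1/|q-φ|) :=
        mul_le_mul_of_nonneg_left hinv hXmax0.le
      have hv : (0:ℝ) ≤ X ^ max 1 a * (1/|q-φ|) := by positivity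
      linarith
  -- final assembly
  by_cases hqφ : q = φ
  · rw [if_pos hqφ]
    linarith [hred, key1]
  · rw [if_neg hqφ]
    have h1 : ∑ n ∈ Finset.Icc (-⌊X⌋) ⌊X⌋, (X / (1 + |(n : ℝ)|)) ^ a
        ≤ 14 * X ^ max 1 a * Real.log X := by linarith [hred, key1]
    have h2 : ∑ n ∈ Finset.Icc (-⌊X⌋) ⌊X⌋, (X / (1 + |(n : ℝ)|)) ^ a
        ≤ 14 * X ^ max 1 a * (1 / |q - φ|) := by linarith [hred, key2 hqφ]
    rcases min_cases (Real.log X) (1 / |q - φ|) with ⟨hmin, _⟩ | ⟨hmin, _⟩ <;> rw [hmin]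
    · exact h1
    · exact h2
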